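/- Let A be an isotropic subspace and L a Lagrangian subspace of H. Then ((L + A) ∩ A^⊥)^⊥ ∩ A^⊥ = (L + A) ∩ A^⊥. Equivalently, the contraction L|A := ((L + A) ∩ A^⊥)/A of L along A equals its own orthogonal in the quotient symplectic space H|A := A^⊥/A with the bilinear form induced by ω; that is, the contraction of a Lagrangian subspace along an isotropic subspace is again Lagrangian. -/

import Mathlib

open LinearMap BilinForm

lemma orthogonal_sup' {H : Type*} [AddCommGroup H] [Module ℝ H]
    (ω : LinearMap.BilinForm ℝ H) (B C : Submodule ℝ H) :
    ω.orthogonal (B ⊔ C) = ω.orthogonal B ⊓ ω.orthogonal C := by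
  ext x
  constructor
  · intro hx
    exact ⟨fun b hb => hx b (Submodule.mem_sup_left hb),
           fun c hc => hx c (Submodule.mem_sup_right hc)⟩
  · rintro ⟨h1, h2⟩ y hy
    obtain ⟨b, hb, c, hc, rfl⟩ := Submodule.mem_sup.mp hy
    have := h1 b hb
    have := h2 c hc
    simp [*]

/-- Let `A` be an isotropic subspace and `L` a Lagrangian subspace of a
finite-dimensional real symplectic space `(H, ω)`. Then
`((L + A) ∩ A^⊥)^⊥ ∩ A^⊥ = (L + A) ∩ A^⊥`, i.e. the contraction of a Lagrangian subspace
along an isotropic subspace equals its own orthogonal in the quotient symplectic space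
`A^⊥/A`: the contraction of a Lagrangian subspace along an isotropic subspace is Lagrangian. -/
theorem contraction_of_lagrangian_is_lagrangian
    {H : Type*} [AddCommGroup H] [Module ℝ H] [FiniteDimensional ℝ H]
    (ω : LinearMap.BilinForm ℝ H)
    (hanti : ∀ x y : H, ω x y = -ω y x)
    (hnd : ∀ x : H, (∀ y : H, ω x y = 0) → x = 0)
    (A L : Submodule ℝ H)
    (hA : A ≤ LinearMap.BilinForm.orthogonal ω A)
    (hL : L = LinearMap.BilinForm.orthogonal ω L) :
    LinearMap.BilinForm.orthogonal ω ((L ⊔ A) ⊓ LinearMap.BilinForm.orthogonal ω A) ⊓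
        LinearMap.BilinForm.orthogonal ω A =
      (L ⊔ A) ⊓ LinearMap.BilinForm.orthogonal ω A := by
  have hrefl : ω.IsRefl := fun x y h => by rw [hanti y x, h, neg_zero]
  have hndg : ω.Nondegenerate := ⟨hnd, fun y hy => hnd y fun x => by rw [hanti, hy, neg_zero]⟩
  have hdo : ∀ B : Submodule ℝ H, ω.orthogonal (ω.orthogonal B) = B :=
    fun B => LinearMap.BilinForm.orthogonal_orthogonal hndg hrefl B
  have hinf : ∀ B C : Submodule ℝ H,
      ω.orthogonal (B ⊓ C) = ω.orthogonal B ⊔ ω.orthogonal C := by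
    intro B C
    have : B ⊓ C = ω.orthogonal (ω.orthogonal B ⊔ ω.orthogonal C) := by
      rw [orthogonal_sup', hdo, hdo]
    rw [this, hdo]
  -- modular law: (L ⊔ A) ⊓ A^⊥ = (L ⊓ A^⊥) ⊔ A
  have hmod : (L ⊔ A) ⊓ ω.orthogonal A = (L ⊓ ω.orthogonal A) ⊔ A := by
    rw [sup_comm L A, sup_comm (L ⊓ ω.orthogonal A) A]
    exact sup_inf_assoc_of_le _ hA
  rw [hmod, orthogonal_sup', hinf, ← hL, hdo, inf_assoc, inf_idem]
  exact hmod
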